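/- arXiv:1901.05774 — 3 statements merged into one kernel-verified Lean document; each statement's English description precedes it below -/
import Mathlib

section
/- Let V be Minkowski space, v null, w spacelike with ⟨v,w⟩ = 0, w ≠ 0, and set N = v∧w. Then lim_{t→∞} (1/(1+t²)) exp(tN) = −(⟨w,w⟩/2) · (x ↦ ⟨v,x⟩v), i.e. the rescaled exponential converges to −‖w‖²/2 times the rank-one map x ↦ ⟨v,x⟩v. -/
open Matrix Filter

/-- Sign of the Minkowski metric on `ℝ^{n+2}_1`: the last coordinate is timelike. -/
noncomputable def minkSign (n : ℕ) (i : Fin (n + 2)) : ℝ := if (i : ℕ) = n + 1 then -1 else 1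

/-- The Minkowski inner product `⟨·,·⟩` on `ℝ^{n+2}_1` (signature (n+1,1)). -/
noncomputable def mink (n : ℕ) (x y : Fin (n + 2) → ℝ) : ℝ := ∑ i, minkSign n i * x i * y i

/-- The wedge endomorphism `(v ∧ w)(x) = ⟨v,x⟩w − ⟨w,x⟩v`, realized as a matrix acting by `mulVec`. -/
noncomputable def wedgeM (n : ℕ) (v w : Fin (n + 2) → ℝ) : Matrix (Fin (n + 2)) (Fin (n + 2)) ℝ :=
  Matrix.of fun i j => minkSign n j * (v j * w i - w j * v i)


lemma wedge_sq (n : ℕ) (v w : Fin (n + 2) → ℝ)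
    (hv : mink n v v = 0) (hvw : mink n v w = 0) :
    (wedgeM n v w) ^ 2 =
      (-(mink n w w)) • Matrix.of fun i j => minkSign n j * v j * v i := by
  ext i j
  rw [pow_two, Matrix.mul_apply]
  have : ∀ k, wedgeM n v w i k * wedgeM n v w k j
      = (minkSign n j * (w i * v j + v i * w j)) * (minkSign n k * v k * w k)
        - (minkSign n j * (w i * w j)) * (minkSign n k * v k * v k)
        - (minkSign n j * (v i * v j)) * (minkSign n k * w k * w k) := by
    intro k; simp only [wedgeM, Matrix.of_apply]; ring
  rw [Finset.sum_congr rfl (fun k _ => this k)]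
  simp only [Finset.sum_sub_distrib, ← Finset.mul_sum]
  have h1 : ∑ k, minkSign n k * v k * w k = mink n v w := rfl
  have h2 : ∑ k, minkSign n k * v k * v k = mink n v v := rfl
  have h3 : ∑ k, minkSign n k * w k * w k = mink n w w := rfl
  rw [h1, h2, h3, hv, hvw]
  simp [Matrix.smul_apply]
  ring

lemma wedge_cube (n : ℕ) (v w : Fin (n + 2) → ℝ)
    (hv : mink n v v = 0) (hvw : mink n v w = 0) :
    (wedgeM n v w) ^ 3 = 0 := by
  have hPN : (Matrix.of fun i j => minkSign n j * v j * v i) * wedgeM n v w = 0 := by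
    ext i j
    rw [Matrix.mul_apply]
    have : ∀ k, (Matrix.of fun i j => minkSign n j * v j * v i) i k * wedgeM n v w k j
        = (minkSign n j * (v i * v j)) * (minkSign n k * v k * w k)
          - (minkSign n j * (v i * w j)) * (minkSign n k * v k * v k) := by
      intro k; simp only [wedgeM, Matrix.of_apply]; ring
    rw [Finset.sum_congr rfl (fun k _ => this k)]
    simp only [Finset.sum_sub_distrib, ← Finset.mul_sum]
    have h1 : ∑ k, minkSign n k * v k * w k = mink n v w := rfl
    have h2 : ∑ k, minkSign n k * v k * v k = mink n v v := rfl
    rw [h1, h2, hv, hvw]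
    simp
  have : (wedgeM n v w) ^ 3 = (wedgeM n v w) ^ 2 * wedgeM n v w := by rw [pow_succ]
  rw [this, wedge_sq n v w hv hvw, Matrix.smul_mul, hPN, smul_zero]

lemma exp_wedge (n : ℕ) (v w : Fin (n + 2) → ℝ)
    (hv : mink n v v = 0) (hvw : mink n v w = 0) (t : ℝ) :
    NormedSpace.exp (t • wedgeM n v w)
      = 1 + t • wedgeM n v w + (t ^ 2 / 2) • (wedgeM n v w) ^ 2 := by
  rw [NormedSpace.exp_eq_tsum (𝕂 := ℝ)]
  simp only []
  rw [tsum_eq_sum (s := Finset.range 3) (f := fun k => ((k.factorial : ℝ))⁻¹ • (t • wedgeM n v w) ^ k)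
    (by
      intro b hb
      have hb3 : 3 ≤ b := by simp [Finset.mem_range] at hb; omega
      have h0 : (wedgeM n v w) ^ b = 0 := pow_eq_zero_of_le hb3 (wedge_cube n v w hv hvw)
      simp only [smul_pow, h0, smul_zero])]
  simp [Finset.sum_range_succ, smul_pow, smul_smul]
  ring_nf

lemma lim1 : Tendsto (fun t : ℝ => (1 + t ^ 2)⁻¹) atTop (nhds 0) := by
  apply Tendsto.inv_tendsto_atTop
  exact tendsto_atTop_add_const_left _ 1 (tendsto_pow_atTop two_ne_zero)

lemma lim2 : Tendsto (fun t : ℝ => (1 + t ^ 2)⁻¹ * t) atTop (nhds 0) := by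
  have h : Tendsto (fun t : ℝ => (t⁻¹ + t)⁻¹) atTop (nhds 0) := by
    apply Tendsto.inv_tendsto_atTop
    exact tendsto_inv_atTop_zero.add_atTop tendsto_id
  apply h.congr'
  filter_upwards [eventually_gt_atTop (0 : ℝ)] with t ht
  have ht' : t ≠ 0 := ne_of_gt ht
  rw [show t⁻¹ + t = (1 + t ^ 2) * t⁻¹ by field_simp, mul_inv, inv_inv]

lemma lim3 : Tendsto (fun t : ℝ => (1 + t ^ 2)⁻¹ * (t ^ 2 / 2)) atTop (nhds (1 / 2)) := by
  have h : Tendsto (fun t : ℝ => ((t⁻¹) ^ 2 + 1)⁻¹ * (1 / 2)) atTop (nhds (1 / 2)) := by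
    have : Tendsto (fun t : ℝ => ((t⁻¹) ^ 2 + 1)⁻¹) atTop (nhds 1) := by
      have h1 : Tendsto (fun t : ℝ => (t⁻¹) ^ 2 + 1) atTop (nhds 1) := by
        have := (tendsto_inv_atTop_zero (𝕜 := ℝ)).pow 2
        simpa using this.add_const 1
      simpa using h1.inv₀ (by norm_num)
    have h2 := this.mul_const (1 / 2)
    rwa [one_mul] at h2
  apply h.congr'
  filter_upwards [eventually_gt_atTop (0 : ℝ)] with t ht
  have ht' : t ≠ 0 := ne_of_gt ht
  field_simp

/-- for `v` null, `w ≠ 0` spacelike, `⟨v,w⟩ = 0`, `N = v∧w`, the rescaled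
exponential `(1+t²)⁻¹ exp(tN)` converges as `t → ∞` to `−(⟨w,w⟩/2)` times the
rank-one map `x ↦ ⟨v,x⟩v` (whose matrix is `(i,j) ↦ σ_j v_j v_i`). -/
theorem wedge_degenerate_rescaled_exp_limit (n : ℕ) (v w : Fin (n + 2) → ℝ)
    (hv : mink n v v = 0) (hw : 0 < mink n w w) (hvw : mink n v w = 0) (hw0 : w ≠ 0) :
    Tendsto (fun t : ℝ => (1 + t ^ 2)⁻¹ • NormedSpace.exp (t • wedgeM n v w)) atTop
      (nhds ((-(mink n w w / 2)) • Matrix.of fun i j => minkSign n j * v j * v i)) := by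
  set N := wedgeM n v w with hN
  set P : Matrix (Fin (n + 2)) (Fin (n + 2)) ℝ := Matrix.of fun i j => minkSign n j * v j * v i with hP
  have key : ∀ t : ℝ, (1 + t ^ 2)⁻¹ • NormedSpace.exp (t • N)
      = (1 + t ^ 2)⁻¹ • (1 : Matrix (Fin (n+2)) (Fin (n+2)) ℝ)
        + ((1 + t ^ 2)⁻¹ * t) • N + ((1 + t ^ 2)⁻¹ * (t ^ 2 / 2)) • N ^ 2 := by
    intro t
    rw [exp_wedge n v w hv hvw t, smul_add, smul_add, smul_smul, smul_smul]
  have hlim : Tendsto (fun t : ℝ =>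
      (1 + t ^ 2)⁻¹ • (1 : Matrix (Fin (n+2)) (Fin (n+2)) ℝ)
        + ((1 + t ^ 2)⁻¹ * t) • N + ((1 + t ^ 2)⁻¹ * (t ^ 2 / 2)) • N ^ 2) atTop
      (nhds ((0:ℝ) • (1 : Matrix (Fin (n+2)) (Fin (n+2)) ℝ) + (0:ℝ) • N + (1/2 : ℝ) • N ^ 2)) := by
    exact ((lim1.smul_const _).add (lim2.smul_const _)).add (lim3.smul_const _)
  have heq : (0:ℝ) • (1 : Matrix (Fin (n+2)) (Fin (n+2)) ℝ) + (0:ℝ) • N + (1/2 : ℝ) • N ^ 2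
      = (-(mink n w w / 2)) • P := by
    rw [wedge_sq n v w hv hvw, zero_smul, zero_smul, zero_add, zero_add, smul_smul]
    congr 1
    ring
  rw [heq] at hlim
  exact hlim.congr fun t => (key t).symm
end

section
/- Let A be an endomorphism of Minkowski space V that is skew-adjoint with respect to ⟨·,·⟩, and suppose A has null eigenvectors V₊, V₋ with eigenvalues ζ and −ζ respectively (ζ > 0, ⟨V₊,V₋⟩ ≠ 0), and A vanishes on the orthogonal complement of span(V₊,V₋). Then lim_{t→∞} e^{−tζ} exp(tA) = P, where P is the endomorphism P(x) = ⟨V₋,x⟩V₊ / ⟨V₊,V₋⟩. -/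
open Matrix Filter

-- basic lemmas
lemma mink_comm (n : ℕ) (x y : Fin (n+2) → ℝ) : mink n x y = mink n y x := by
  unfold mink; exact Finset.sum_congr rfl fun i _ => by ring

lemma mink_add_right (n : ℕ) (x y z : Fin (n+2) → ℝ) :
    mink n x (y + z) = mink n x y + mink n x z := by
  unfold mink; rw [← Finset.sum_add_distrib]
  exact Finset.sum_congr rfl fun i _ => by simp [Pi.add_apply]; ring

lemma mink_smul_right (n : ℕ) (c : ℝ) (x y : Fin (n+2) → ℝ) :
    mink n x (c • y) = c * mink n x y := by
  unfold mink; rw [Finset.mul_sum]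
  exact Finset.sum_congr rfl fun i _ => by simp [Pi.smul_apply]; ring

lemma mink_single (n : ℕ) (x : Fin (n+2) → ℝ) (j : Fin (n+2)) :
    mink n x (Pi.single j 1) = minkSign n j * x j := by
  unfold mink
  rw [Finset.sum_eq_single j]
  · simp
  · intro i _ hij; simp [Pi.single_apply, hij]
  · simp

/-- rank-one matrix `x ↦ ⟨v,x⟩ w` -/
noncomputable def rk1 (n : ℕ) (v w : Fin (n + 2) → ℝ) : Matrix (Fin (n+2)) (Fin (n+2)) ℝ :=
  Matrix.of fun i j => minkSign n j * v j * w i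

lemma rk1_mulVec (n : ℕ) (v w x : Fin (n+2) → ℝ) :
    (rk1 n v w).mulVec x = (mink n v x) • w := by
  ext i
  simp only [rk1, Matrix.mulVec, dotProduct, Matrix.of_apply, Pi.smul_apply, mink,
    smul_eq_mul, Finset.sum_mul]
  exact Finset.sum_congr rfl fun j _ => by ring

lemma rk1_mul (n : ℕ) (v w v' w' : Fin (n+2) → ℝ) :
    rk1 n v w * rk1 n v' w' = (mink n v w') • rk1 n v' w := by
  ext i j
  simp only [rk1, Matrix.mul_apply, Matrix.of_apply, Matrix.smul_apply, mink, smul_eq_mul,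
    Finset.sum_mul]
  exact Finset.sum_congr rfl fun k _ => by ring

lemma proj_pow {m : Type*} [Fintype m] [DecidableEq m] (P Q : Matrix m m ℝ)
    (hP : P * P = P) (hQ : Q * Q = Q) (hPQ : P * Q = 0) (hQP : Q * P = 0) (s : ℝ) :
    ∀ k : ℕ, (s • P + (-s) • Q) ^ (k + 1) = s ^ (k + 1) • P + (-s) ^ (k + 1) • Q := by
  intro k
  induction k with
  | zero => simp
  | succ k ih =>
    rw [pow_succ, ih, Matrix.add_mul, Matrix.mul_add, Matrix.mul_add]
    simp only [Matrix.smul_mul, Matrix.mul_smul, hP, hQ, hPQ, hQP, smul_smul, smul_zero,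
      add_zero, zero_add]
    rw [← pow_succ', ← pow_succ']

lemma tsum_exp_tail (s : ℝ) :
    ∑' k : ℕ, ((Nat.factorial (k + 1) : ℝ))⁻¹ * s ^ (k + 1) = Real.exp s - 1 := by
  have hs : Summable fun k : ℕ => ((Nat.factorial k : ℝ))⁻¹ * s ^ k := by
    simpa [div_eq_mul_inv, mul_comm] using Real.summable_pow_div_factorial s
  have h0 : Real.exp s = ∑' k : ℕ, ((Nat.factorial k : ℝ))⁻¹ * s ^ k := by
    rw [Real.exp_eq_exp_ℝ, NormedSpace.exp_eq_tsum ℝ]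
    simp [smul_eq_mul]
  rw [Summable.tsum_eq_zero_add hs] at h0
  simp only [Nat.factorial_zero, Nat.cast_one, inv_one, pow_zero, mul_one] at h0
  linarith [h0]

lemma summable_exp_tail (s : ℝ) :
    Summable fun k : ℕ => ((Nat.factorial (k + 1) : ℝ))⁻¹ * s ^ (k + 1) := by
  have hs : Summable fun k : ℕ => ((Nat.factorial k : ℝ))⁻¹ * s ^ k := by
    simpa [div_eq_mul_inv, mul_comm] using Real.summable_pow_div_factorial s
  exact (summable_nat_add_iff 1).2 hs

lemma exp_proj {m : Type*} [Fintype m] [DecidableEq m] (P Q : Matrix m m ℝ)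
    (hP : P * P = P) (hQ : Q * Q = Q) (hPQ : P * Q = 0) (hQP : Q * P = 0) (s : ℝ) :
    NormedSpace.exp (s • P + (-s) • Q)
      = 1 + (Real.exp s - 1) • P + (Real.exp (-s) - 1) • Q := by
  letI : SeminormedRing (Matrix m m ℝ) := Matrix.linftyOpSemiNormedRing
  letI : NormedRing (Matrix m m ℝ) := Matrix.linftyOpNormedRing
  letI : NormedAlgebra ℝ (Matrix m m ℝ) := Matrix.linftyOpNormedAlgebra
  set X := s • P + (-s) • Q with hX
  have hsum : Summable fun k : ℕ => ((Nat.factorial k : ℝ))⁻¹ • X ^ k :=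
    NormedSpace.expSeries_summable' (𝕂 := ℝ) (𝔸 := Matrix m m ℝ) X
  have hterm : ∀ k : ℕ, ((Nat.factorial (k + 1) : ℝ))⁻¹ • X ^ (k + 1)
      = (((Nat.factorial (k + 1) : ℝ))⁻¹ * s ^ (k + 1)) • P
        + (((Nat.factorial (k + 1) : ℝ))⁻¹ * (-s) ^ (k + 1)) • Q := by
    intro k
    rw [hX, proj_pow P Q hP hQ hPQ hQP s k, smul_add, smul_smul, smul_smul]
  rw [NormedSpace.exp_eq_tsum ℝ]
  beta_reduce
  rw [Summable.tsum_eq_zero_add hsum, tsum_congr hterm,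
    Summable.tsum_add ((summable_exp_tail s).smul_const P) ((summable_exp_tail (-s)).smul_const Q),
    Summable.tsum_smul_const (summable_exp_tail s), Summable.tsum_smul_const (summable_exp_tail (-s)),
    tsum_exp_tail s, tsum_exp_tail (-s)]
  simp [add_assoc]


/-- for a skew-adjoint `A` with null eigenvectors `V₊, V₋` of eigenvalues `±ζ`
(`ζ > 0`, `⟨V₊,V₋⟩ ≠ 0`) vanishing on `span(V₊,V₋)^⊥`, the rescaled one-parameter group
`e^{−tζ} exp(tA)` converges to the rank-one projection `x ↦ ⟨V₋,x⟩V₊/⟨V₊,V₋⟩`. -/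
theorem skew_minkowski_rescaled_exp_limit (n : ℕ)
    (A : Matrix (Fin (n + 2)) (Fin (n + 2)) ℝ) (ζ : ℝ) (Vp Vm : Fin (n + 2) → ℝ)
    (hskew : ∀ x y, mink n (A.mulVec x) y = - mink n x (A.mulVec y))
    (hζ : 0 < ζ)
    (hVp : mink n Vp Vp = 0) (hVm : mink n Vm Vm = 0)
    (hpm : mink n Vp Vm ≠ 0)
    (heigp : A.mulVec Vp = ζ • Vp) (heigm : A.mulVec Vm = (-ζ) • Vm)
    (hperp : ∀ x, mink n Vp x = 0 → mink n Vm x = 0 → A.mulVec x = 0) :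
    Tendsto (fun t : ℝ => Real.exp (-(t * ζ)) • NormedSpace.exp (t • A)) atTop
      (nhds ((mink n Vp Vm)⁻¹ • Matrix.of fun i j => minkSign n j * Vm j * Vp i)) := by
  set c := mink n Vp Vm with hc
  obtain ⟨P, hPdef⟩ : ∃ P : Matrix (Fin (n+2)) (Fin (n+2)) ℝ, P = c⁻¹ • rk1 n Vm Vp := ⟨_, rfl⟩
  obtain ⟨Q, hQdef⟩ : ∃ Q : Matrix (Fin (n+2)) (Fin (n+2)) ℝ, Q = c⁻¹ • rk1 n Vp Vm := ⟨_, rfl⟩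
  have hmc : mink n Vm Vp = c := by rw [mink_comm]
  have hP : P * P = P := by
    rw [hPdef, Matrix.smul_mul, Matrix.mul_smul, rk1_mul, hmc, smul_smul, smul_smul]
    congr 1
    field_simp
  have hQ : Q * Q = Q := by
    rw [hQdef, Matrix.smul_mul, Matrix.mul_smul, rk1_mul, ← hc, smul_smul, smul_smul]
    congr 1
    field_simp
  have hPQ : P * Q = 0 := by
    rw [hPdef, hQdef, Matrix.smul_mul, Matrix.mul_smul, rk1_mul, hVm]
    simp
  have hQP : Q * P = 0 := by
    rw [hPdef, hQdef, Matrix.smul_mul, Matrix.mul_smul, rk1_mul, hVp]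
    simp
  -- the key structural formula for A
  have key : ∀ x, A.mulVec x
      = ((c⁻¹ * mink n Vm x) * ζ) • Vp + ((c⁻¹ * mink n Vp x) * (-ζ)) • Vm := by
    intro x
    set a := c⁻¹ * mink n Vm x with ha
    set b := c⁻¹ * mink n Vp x with hb
    set y := x + (-a) • Vp + (-b) • Vm with hy
    have hy1 : mink n Vp y = 0 := by
      rw [hy, mink_add_right, mink_add_right, mink_smul_right, mink_smul_right, hVp, ← hc, hb]
      field_simp
      ring
    have hy2 : mink n Vm y = 0 := by
      rw [hy, mink_add_right, mink_add_right, mink_smul_right, mink_smul_right, hVm, hmc, ha]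
      field_simp
      ring
    have hxy : x = a • Vp + b • Vm + y := by
      funext i
      simp only [hy, Pi.add_apply, Pi.smul_apply, smul_eq_mul, Pi.neg_apply, neg_smul]
      ring
    rw [hxy, Matrix.mulVec_add, Matrix.mulVec_add, Matrix.mulVec_smul, Matrix.mulVec_smul,
      heigp, heigm, hperp y hy1 hy2, add_zero, smul_smul, smul_smul]
  have hA : A = ζ • P + (-ζ) • Q := by
    ext i j
    have h := congrFun (key (Pi.single j 1)) i
    rw [Matrix.mulVec_single_one] at h
    simp only [mink_single, mul_one, Matrix.col_apply] at h
    rw [h]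
    simp only [hPdef, hQdef, Matrix.add_apply, Matrix.smul_apply, rk1, Matrix.of_apply,
      Pi.add_apply, Pi.smul_apply, smul_eq_mul]
    ring
  have hexp : ∀ t : ℝ, NormedSpace.exp (t • A)
      = 1 + (Real.exp (t * ζ) - 1) • P + (Real.exp (-(t * ζ)) - 1) • Q := by
    intro t
    have h1 : t • A = (t * ζ) • P + (-(t * ζ)) • Q := by
      rw [hA, smul_add, smul_smul, smul_smul, show t * -ζ = -(t * ζ) by ring]
    rw [h1, exp_proj P Q hP hQ hPQ hQP (t * ζ)]
  have hu : Tendsto (fun t : ℝ => Real.exp (-(t * ζ))) atTop (nhds 0) := by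
    refine Real.tendsto_exp_atBot.comp ?_
    exact tendsto_neg_atTop_atBot.comp (tendsto_id.atTop_mul_const hζ)
  have hfun : ∀ t : ℝ, Real.exp (-(t * ζ)) • NormedSpace.exp (t • A)
      = Real.exp (-(t * ζ)) • (1 : Matrix (Fin (n+2)) (Fin (n+2)) ℝ)
        + (1 - Real.exp (-(t * ζ))) • P
        + (Real.exp (-(t * ζ)) * Real.exp (-(t * ζ)) - Real.exp (-(t * ζ))) • Q := by
    intro t
    rw [hexp t, smul_add, smul_add, smul_smul, smul_smul]
    have e1 : Real.exp (-(t * ζ)) * (Real.exp (t * ζ) - 1) = 1 - Real.exp (-(t * ζ)) := by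
      rw [mul_sub, ← Real.exp_add]
      simp
    rw [e1, show Real.exp (-(t * ζ)) * (Real.exp (-(t * ζ)) - 1)
      = Real.exp (-(t * ζ)) * Real.exp (-(t * ζ)) - Real.exp (-(t * ζ)) by ring]
  have htarget : Tendsto (fun t : ℝ =>
      Real.exp (-(t * ζ)) • (1 : Matrix (Fin (n+2)) (Fin (n+2)) ℝ)
        + (1 - Real.exp (-(t * ζ))) • P
        + (Real.exp (-(t * ζ)) * Real.exp (-(t * ζ)) - Real.exp (-(t * ζ))) • Q) atTop
      (nhds ((0:ℝ) • (1 : Matrix (Fin (n+2)) (Fin (n+2)) ℝ) + (1 - 0 : ℝ) • P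
        + ((0:ℝ) * 0 - 0) • Q)) := by
    exact ((hu.smul_const 1).add ((tendsto_const_nhds.sub hu).smul_const P)).add
      (((hu.mul hu).sub hu).smul_const Q)
  norm_num at htarget
  have : Tendsto (fun t : ℝ => Real.exp (-(t * ζ)) • NormedSpace.exp (t • A)) atTop (nhds P) := by
    refine htarget.congr fun t => (hfun t).symm
  rw [show (c⁻¹ • of fun i j => minkSign n j * Vm j * Vp i :
    Matrix (Fin (n+2)) (Fin (n+2)) ℝ) = P from hPdef.symm]
  exact this
end

section
/- Let A, B : [a,b] → End(ℝ^N) be continuous, let Γ_A, Γ_B be the solutions of Γ' = ΓA resp. Γ' = ΓB with value id at a, and suppose |Γ_A(s)| ≤ C₁, |Γ_B(s)⁻¹Γ_B(t)| ≤ C₂ for all s,t, and |A(s) − B(s)| ≤ ε for all s. Then |Γ_A(t) − Γ_B(t)| ≤ C₁C₂ε(b−a) for all t ∈ [a,b]. -/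
open Set

set_option synthInstance.maxHeartbeats 1000000
set_option maxHeartbeats 1000000

/-- quantitative comparison of fundamental solutions: if `‖Γ_A(s)‖ ≤ C₁`,
`‖Γ_B(s)⁻¹Γ_B(t)‖ ≤ C₂` and `‖A(s) − B(s)‖ ≤ ε` on `[a,b]`, then
`‖Γ_A(t) − Γ_B(t)‖ ≤ C₁C₂ε(b−a)`. -/
theorem fundamental_solutions_comparison (N : ℕ) (a b : ℝ) (hab : a ≤ b)
    (A B ΓA ΓB ΓBinv : ℝ → (Fin N → ℝ) →L[ℝ] (Fin N → ℝ))
    (C₁ C₂ ε : ℝ)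
    (hA : ContinuousOn A (Icc a b)) (hB : ContinuousOn B (Icc a b))
    (hΓA : ∀ t ∈ Icc a b, HasDerivAt ΓA (ΓA t * A t) t) (hΓAa : ΓA a = 1)
    (hΓB : ∀ t ∈ Icc a b, HasDerivAt ΓB (ΓB t * B t) t) (hΓBa : ΓB a = 1)
    (hinv : ∀ t ∈ Icc a b, ΓB t * ΓBinv t = 1 ∧ ΓBinv t * ΓB t = 1)
    (hC₁ : ∀ s ∈ Icc a b, ‖ΓA s‖ ≤ C₁)
    (hC₂ : ∀ s ∈ Icc a b, ∀ t ∈ Icc a b, ‖ΓBinv s * ΓB t‖ ≤ C₂)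
    (hε : ∀ s ∈ Icc a b, ‖A s - B s‖ ≤ ε) :
    ∀ t ∈ Icc a b, ‖ΓA t - ΓB t‖ ≤ C₁ * C₂ * ε * (b - a) := by
  intro t ht
  have ha : a ∈ Icc a b := ⟨le_refl a, hab⟩
  have hC₁0 : 0 ≤ C₁ := (norm_nonneg _).trans (hC₁ a ha)
  have hC₂0 : 0 ≤ C₂ := (norm_nonneg _).trans (hC₂ a ha a ha)
  have hε0 : 0 ≤ ε := (norm_nonneg _).trans (hε a ha)
  -- units
  have unit : ∀ s ∈ Icc a b, IsUnit (ΓB s) := fun s hs =>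
    ⟨⟨ΓB s, ΓBinv s, (hinv s hs).1, (hinv s hs).2⟩, rfl⟩
  have hRinv : ∀ s ∈ Icc a b, Ring.inverse (ΓB s) = ΓBinv s := by
    intro s hs
    exact Ring.inverse_unit (⟨ΓB s, ΓBinv s, (hinv s hs).1, (hinv s hs).2⟩)
  -- derivative of the inverse
  have hinvderiv : ∀ s ∈ Icc a b,
      HasDerivAt (fun x => Ring.inverse (ΓB x)) (-(B s * ΓBinv s)) s := by
    intro s hs
    have hu : HasFDerivAt Ring.inverse
        (-ContinuousLinearMap.mulLeftRight ℝ _ (ΓBinv s) (ΓBinv s)) (ΓB s) := by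
      have := hasFDerivAt_ringInverse (𝕜 := ℝ)
        (⟨ΓB s, ΓBinv s, (hinv s hs).1, (hinv s hs).2⟩ : ((Fin N → ℝ) →L[ℝ] (Fin N → ℝ))ˣ)
      simpa using this
    have := hu.comp_hasDerivAt s (hΓB s hs)
    convert this using 1
    iterate 4 rfl
    simp only [ContinuousLinearMap.neg_apply, ContinuousLinearMap.mulLeftRight_apply]
    rw [← mul_assoc, (hinv s hs).2, one_mul]
  -- derivative of G = ΓA * (ΓB)⁻¹
  have hG : ∀ s ∈ Icc a b,
      HasDerivAt (fun x => ΓA x * Ring.inverse (ΓB x))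
        (ΓA s * (A s - B s) * Ring.inverse (ΓB s)) s := by
    intro s hs
    have := (hΓA s hs).mul (hinvderiv s hs)
    convert this using 1
    iterate 4 rfl
    rw [hRinv s hs]
    noncomm_ring
  -- continuity of the integrand
  have hΓAc : ContinuousOn ΓA (Icc a b) := fun s hs =>
    ((hΓA s hs).continuousAt).continuousWithinAt
  have hinvc : ContinuousOn (fun x => Ring.inverse (ΓB x)) (Icc a b) := fun s hs =>
    ((hinvderiv s hs).continuousAt).continuousWithinAt
  have hgc : ContinuousOn (fun s => ΓA s * (A s - B s) * Ring.inverse (ΓB s)) (Icc a b) :=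
    (hΓAc.mul (hA.sub hB)).mul hinvc
  have hsub : Icc a t ⊆ Icc a b := Icc_subset_Icc le_rfl ht.2
  have huIcc : uIcc a t = Icc a t := uIcc_of_le ht.1
  have hint : IntervalIntegrable (fun s => ΓA s * (A s - B s) * Ring.inverse (ΓB s))
      MeasureTheory.volume a t := by
    have h : ContinuousOn (fun s => ΓA s * (A s - B s) * Ring.inverse (ΓB s)) (uIcc a t) := by
      rw [huIcc]; exact hgc.mono hsub
    exact h.intervalIntegrable
  -- FTC
  have hFTC : (∫ s in a..t, ΓA s * (A s - B s) * Ring.inverse (ΓB s))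
      = ΓA t * Ring.inverse (ΓB t) - 1 := by
    have := intervalIntegral.integral_eq_sub_of_hasDerivAt
      (f := fun x => ΓA x * Ring.inverse (ΓB x))
      (fun s hs => hG s (hsub (huIcc ▸ hs))) hint
    rw [this]; simp [hΓAa, hΓBa]
  -- multiply by ΓB t on the right
  have hkey : ΓA t - ΓB t
      = ∫ s in a..t, (ΓA s * (A s - B s) * Ring.inverse (ΓB s)) * ΓB t := by
    have := ContinuousLinearMap.intervalIntegral_comp_comm
      ((ContinuousLinearMap.mul ℝ ((Fin N → ℝ) →L[ℝ] (Fin N → ℝ))).flip (ΓB t)) hint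
    simp only [ContinuousLinearMap.flip_apply, ContinuousLinearMap.mul_apply'] at this
    rw [this, hFTC, sub_mul, one_mul, mul_assoc, hRinv t ht, (hinv t ht).2, mul_one]
  rw [hkey]
  have hbound : ‖∫ s in a..t, (ΓA s * (A s - B s) * Ring.inverse (ΓB s)) * ΓB t‖
      ≤ C₁ * ε * C₂ * |t - a| := by
    apply intervalIntegral.norm_integral_le_of_norm_le_const
    intro s hs
    rw [uIoc_of_le ht.1] at hs
    have hs' : s ∈ Icc a b := ⟨le_of_lt hs.1, hs.2.trans ht.2⟩
    rw [mul_assoc, hRinv s hs']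
    calc ‖ΓA s * (A s - B s) * (ΓBinv s * ΓB t)‖
        ≤ ‖ΓA s * (A s - B s)‖ * ‖ΓBinv s * ΓB t‖ := norm_mul_le _ _
      _ ≤ ‖ΓA s‖ * ‖A s - B s‖ * ‖ΓBinv s * ΓB t‖ :=
          mul_le_mul_of_nonneg_right (norm_mul_le _ _) (norm_nonneg _)
      _ ≤ C₁ * ε * C₂ := by
          apply mul_le_mul (mul_le_mul (hC₁ s hs') (hε s hs') (norm_nonneg _) hC₁0)
            (hC₂ s hs' t ht) (norm_nonneg _) (by positivity)
  refine hbound.trans ?_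
  have h1 : |t - a| = t - a := abs_of_nonneg (by linarith [ht.1])
  have h2 : t - a ≤ b - a := by linarith [ht.2]
  calc C₁ * ε * C₂ * |t - a| = C₁ * C₂ * ε * (t - a) := by rw [h1]; ring
    _ ≤ C₁ * C₂ * ε * (b - a) := by
        apply mul_le_mul_of_nonneg_left h2 (by positivity)
end
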